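/- In a Polish space, a closed set P is perfect (nonempty with no isolated points) if and only if P is nonempty and every point of P is the limit of a sequence of points of P distinct from it; and any nonempty closed set without isolated points in Cantor space contains a homeomorphic copy of Cantor space. -/

import Mathlib

/-- In a Polish space, a closed set `P` is perfect (nonempty with no isolated points)
iff `P` is nonempty and every point of `P` is the limit of a sequence of points of `P`
distinct from it; and any nonempty closed subset of Cantor space without isolated
points contains a homeomorphic copy of Cantor space. -/
theorem stmt_19 :
    (∀ (X : Type) [TopologicalSpace X] [PolishSpace X] (P : Set X), IsClosed P →
      ((P.Nonempty ∧ ∀ x ∈ P, ¬∃ U : Set X, IsOpen U ∧ U ∩ P = {x}) ↔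
        (P.Nonempty ∧ ∀ x ∈ P, ∃ u : ℕ → X, (∀ n, u n ∈ P ∧ u n ≠ x) ∧
          Filter.Tendsto u Filter.atTop (nhds x)))) ∧
    (∀ P : Set (ℕ → Bool), IsClosed P → P.Nonempty →
      (∀ x ∈ P, ¬∃ U : Set (ℕ → Bool), IsOpen U ∧ U ∩ P = {x}) →
      ∃ f : (ℕ → Bool) → (ℕ → Bool), Topology.IsEmbedding f ∧ Set.range f ⊆ P) := by
  constructor
  · intro X _ _ P _hP
    letI := TopologicalSpace.upgradeIsCompletelyMetrizable X
    constructor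
    · rintro ⟨hne, hiso⟩
      refine ⟨hne, fun x hx => ?_⟩
      have hcl : x ∈ closure (P \ {x}) := by
        rw [mem_closure_iff]
        intro U hU hxU
        by_contra h
        apply hiso x hx
        refine ⟨U, hU, Set.eq_singleton_iff_unique_mem.2 ⟨⟨hxU, hx⟩, fun y hy => ?_⟩⟩
        by_contra hyx
        exact h ⟨y, hy.1, hy.2, hyx⟩
      obtain ⟨u, hu, hlim⟩ := mem_closure_iff_seq_limit.1 hcl
      exact ⟨u, fun n => ⟨(hu n).1, (hu n).2⟩, hlim⟩
    · rintro ⟨hne', hseq⟩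
      refine ⟨hne', fun x hx => ?_⟩
      rintro ⟨U, hUopen, hUP⟩
      obtain ⟨u, hu, hlim⟩ := hseq x hx
      have hxU : x ∈ U := by
        have : x ∈ U ∩ P := hUP ▸ rfl
        exact this.1
      have hmem := hlim (hUopen.mem_nhds hxU)
      rw [Filter.mem_map, Filter.mem_atTop_sets] at hmem
      obtain ⟨n, hn⟩ := hmem
      have : u n ∈ U ∩ P := ⟨hn n le_rfl, (hu n).1⟩
      rw [hUP] at this
      exact (hu n).2 this
  · intro P hP hne hiso
    letI := TopologicalSpace.upgradeIsCompletelyMetrizable (ℕ → Bool)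
    have hperf : Perfect P := by
      refine ⟨hP, fun x hx => ?_⟩
      rw [accPt_iff_nhds]
      intro U hU
      obtain ⟨V, hVU, hVopen, hxV⟩ := mem_nhds_iff.1 hU
      by_contra h
      push_neg at h
      apply hiso x hx
      refine ⟨V, hVopen, Set.eq_singleton_iff_unique_mem.2 ⟨⟨hxV, hx⟩, fun y hy => ?_⟩⟩
      by_contra hyx
      exact hyx (h y ⟨hVU hy.1, hy.2⟩)
    obtain ⟨f, hrange, hcont, hinj⟩ := hperf.exists_nat_bool_injection hne
    exact ⟨f, (hcont.isClosedEmbedding hinj).toIsEmbedding, hrange⟩
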